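/- Let n ≥ 1, let f ∈ ℝ[X] with natDegree f ≤ n, and let s = (s_1, …, s_n) ∈ {−1,0,1}^n with s ≠ (0, …, 0). Let (q_k)_{k∈K} be a finite family of real polynomials and (ρ_k)_{k∈K} a family of relations with each ρ_k ∈ {=, ≠, <, ≤, ≥, >}. Then there exists θ ∈ ℝ such that for every k ∈ K: if there exists x ∈ ℝ which is a Thom root of f with code s at level n and which satisfies q_k(x) ρ_k 0, then q_k(θ) ρ_k 0. -/

import Mathlib

open Polynomial Filter Set Topology

inductive SignRel | eq | ne | lt | le | ge | gt

def SignRel.holds : SignRel → ℝ → Prop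
  | .eq, x => x = 0
  | .ne, x => x ≠ 0
  | .lt, x => x < 0
  | .le, x => x ≤ 0
  | .ge, x => x ≥ 0
  | .gt, x => x > 0

def IsThomRoot (n : ℕ) (f : Polynomial ℝ) (s : Fin n → ℝ) (ξ : ℝ) : Prop :=
  f.eval ξ = 0 ∧
    ∀ i : Fin n, Real.sign ((Polynomial.derivative^[(i : ℕ) + 1] f).eval ξ) = s i

private lemma sign_between {a b c : ℝ} (hab : Real.sign a = Real.sign b)
    (hac : a ≤ c) (hcb : c ≤ b) : Real.sign c = Real.sign a := by
  rcases lt_trichotomy a 0 with ha | ha | ha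
  · have hb : b < 0 := by
      by_contra hb
      push_neg at hb
      rcases eq_or_lt_of_le hb with hb | hb
      · rw [Real.sign_of_neg ha, ← hb, Real.sign_zero] at hab; norm_num at hab
      · rw [Real.sign_of_neg ha, Real.sign_of_pos hb] at hab; norm_num at hab
    rw [Real.sign_of_neg ha, Real.sign_of_neg (lt_of_le_of_lt hcb hb)]
  · subst ha
    have hb : b = 0 := Real.sign_eq_zero_iff.1 (by rw [← hab, Real.sign_zero])
    have : c = 0 := le_antisymm (hb ▸ hcb) hac
    rw [this]
  · rw [Real.sign_of_pos ha, Real.sign_of_pos (lt_of_lt_of_le ha hac)]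

private lemma key : ∀ (n : ℕ) (f : Polynomial ℝ), f.natDegree ≤ n → ∀ (ξ η : ℝ), ξ ≤ η →
    (∀ i, 1 ≤ i → i ≤ n →
      Real.sign ((derivative^[i] f).eval ξ) = Real.sign ((derivative^[i] f).eval η)) →
    ∀ j, 1 ≤ j → j ≤ n → ∀ x ∈ Set.Icc ξ η,
      Real.sign ((derivative^[j] f).eval x) = Real.sign ((derivative^[j] f).eval ξ) := by
  intro n
  induction n with
  | zero => intro f hf ξ η hle h j hj1 hj2 x hx; omega
  | succ n ih =>
    intro f hf ξ η hle h j hj1 hj2 x hx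
    set g := derivative f with hgdef
    have hg : g.natDegree ≤ n := le_trans (natDegree_derivative_le f) (by omega)
    have hiter : ∀ (i : ℕ), derivative^[i] g = derivative^[i + 1] f := fun i =>
      (Function.iterate_succ_apply derivative i f).symm
    have ihg := ih g hg ξ η hle (fun i h1 h2 => by
      rw [hiter]; exact h (i + 1) (by omega) (by omega))
    rcases Nat.lt_or_ge j 2 with hj | hj
    · -- j = 1
      have hj1' : j = 1 := by omega
      subst hj1'
      simp only [Function.iterate_one, ← hgdef]
      have h1 : Real.sign (g.eval ξ) = Real.sign (g.eval η) := by
        have := h 1 le_rfl (by omega)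
        simpa [← hgdef] using this
      have hconv : Convex ℝ (Set.Icc ξ η) := convex_Icc ξ η
      have hcont : ContinuousOn (fun y => g.eval y) (Set.Icc ξ η) :=
        (Polynomial.continuous g).continuousOn
      have hdiff : DifferentiableOn ℝ (fun y => g.eval y) (interior (Set.Icc ξ η)) :=
        (Polynomial.differentiable g).differentiableOn
      by_cases hn : n = 0
      · -- g is constant
        have hg0 : g.natDegree = 0 := by omega
        have := Polynomial.eq_C_of_natDegree_le_zero (le_of_eq hg0)
        rw [this]; simp
      · have hsgn : ∀ y ∈ Set.Icc ξ η,
            Real.sign ((derivative g).eval y) = Real.sign ((derivative g).eval ξ) := by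
          intro y hy
          have := ihg 1 le_rfl (by omega) y hy
          simpa using this
        have hderiv : ∀ y, deriv (fun z => g.eval z) y = (derivative g).eval y := fun y =>
          Polynomial.deriv g
        rcases lt_trichotomy ((derivative g).eval ξ) 0 with hd | hd | hd
        · -- antitone
          have hnp : ∀ y ∈ Set.Icc ξ η, (derivative g).eval y ≤ 0 := by
            intro y hy
            have hs := hsgn y hy
            rw [Real.sign_of_neg hd] at hs
            by_contra hpos
            push_neg at hpos
            rw [Real.sign_of_pos hpos] at hs; norm_num at hs
          have hanti : AntitoneOn (fun y => g.eval y) (Set.Icc ξ η) :=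
            antitoneOn_of_deriv_nonpos hconv hcont hdiff (fun y hy => by
              rw [hderiv]; exact hnp y (interior_subset hy))
          have hxl : g.eval η ≤ g.eval x := hanti hx (Set.right_mem_Icc.2 hle) hx.2
          have hxu : g.eval x ≤ g.eval ξ := hanti (Set.left_mem_Icc.2 hle) hx hx.1
          have := sign_between h1.symm hxl hxu
          rw [this, h1]
        · -- deriv zero: g constant on Icc
          have hz : ∀ y ∈ Set.Icc ξ η, (derivative g).eval y = 0 := by
            intro y hy
            have hs := hsgn y hy
            rw [Real.sign_eq_zero_iff.2 hd] at hs
            exact Real.sign_eq_zero_iff.1 hs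
          have hmono : MonotoneOn (fun y => g.eval y) (Set.Icc ξ η) :=
            monotoneOn_of_deriv_nonneg hconv hcont hdiff (fun y hy => by
              rw [hderiv, hz y (interior_subset hy)])
          have hanti : AntitoneOn (fun y => g.eval y) (Set.Icc ξ η) :=
            antitoneOn_of_deriv_nonpos hconv hcont hdiff (fun y hy => by
              rw [hderiv, hz y (interior_subset hy)])
          have h1' : g.eval x = g.eval ξ :=
            le_antisymm (hanti (Set.left_mem_Icc.2 hle) hx hx.1)
              (hmono (Set.left_mem_Icc.2 hle) hx hx.1)
          rw [h1']
        · -- monotone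
          have hnn : ∀ y ∈ Set.Icc ξ η, 0 ≤ (derivative g).eval y := by
            intro y hy
            have hs := hsgn y hy
            rw [Real.sign_of_pos hd] at hs
            by_contra hneg
            push_neg at hneg
            rw [Real.sign_of_neg hneg] at hs; norm_num at hs
          have hmono : MonotoneOn (fun y => g.eval y) (Set.Icc ξ η) :=
            monotoneOn_of_deriv_nonneg hconv hcont hdiff (fun y hy => by
              rw [hderiv]; exact hnn y (interior_subset hy))
          exact sign_between h1 (hmono (Set.left_mem_Icc.2 hle) hx hx.1)
            (hmono hx (Set.right_mem_Icc.2 hle) hx.2)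
    · -- j ≥ 2
      obtain ⟨j', rfl⟩ : ∃ j', j = j' + 1 := ⟨j - 1, by omega⟩
      have := ihg j' (by omega) (by omega) x hx
      rwa [hiter] at this

private lemma thom_unique (n : ℕ) (hn : 1 ≤ n) (f : Polynomial ℝ) (hf : f.natDegree ≤ n)
    (s : Fin n → ℝ) (hs0 : s ≠ fun _ => 0) {ξ η : ℝ} (hle : ξ ≤ η)
    (hξ : IsThomRoot n f s ξ) (hη : IsThomRoot n f s η) : ξ = η := by
  by_contra hne
  have hlt : ξ < η := lt_of_le_of_ne hle hne
  have h : ∀ i, 1 ≤ i → i ≤ n →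
      Real.sign ((derivative^[i] f).eval ξ) = Real.sign ((derivative^[i] f).eval η) := by
    intro i h1 h2
    have e1 := hξ.2 ⟨i - 1, by omega⟩
    have e2 := hη.2 ⟨i - 1, by omega⟩
    simp only [show i - 1 + 1 = i from by omega] at e1 e2
    rw [e1, e2]
  have hkey := key n f hf ξ η hle h 1 le_rfl hn
  simp only [Function.iterate_one] at hkey
  have hconv : Convex ℝ (Set.Icc ξ η) := convex_Icc ξ η
  have hcont : ContinuousOn (fun y => f.eval y) (Set.Icc ξ η) :=
    (Polynomial.continuous f).continuousOn
  have hdiff : DifferentiableOn ℝ (fun y => f.eval y) (interior (Set.Icc ξ η)) :=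
    (Polynomial.differentiable f).differentiableOn
  have hderiv : ∀ y, deriv (fun z => f.eval z) y = (derivative f).eval y := fun y =>
    Polynomial.deriv f
  have hmemξ : ξ ∈ Set.Icc ξ η := Set.left_mem_Icc.2 hle
  have hmemη : η ∈ Set.Icc ξ η := Set.right_mem_Icc.2 hle
  rcases lt_trichotomy ((derivative f).eval ξ) 0 with hd | hd | hd
  · have hneg : ∀ y ∈ interior (Set.Icc ξ η), deriv (fun z => f.eval z) y < 0 := by
      intro y hy
      have hs := hkey y (interior_subset hy)
      rw [Real.sign_of_neg hd] at hs
      rw [hderiv]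
      by_contra hp
      push_neg at hp
      rcases eq_or_lt_of_le hp with hp | hp
      · rw [← hp, Real.sign_zero] at hs; norm_num at hs
      · rw [Real.sign_of_pos hp] at hs; norm_num at hs
    have := strictAntiOn_of_deriv_neg hconv hcont hneg hmemξ hmemη hlt
    beta_reduce at this
    rw [hξ.1, hη.1] at this
    exact lt_irrefl 0 this
  · -- f constant zero on Icc, hence f = 0, contradicting hs0
    have hz : ∀ y ∈ Set.Icc ξ η, (derivative f).eval y = 0 := by
      intro y hy
      have hs := hkey y hy
      rw [Real.sign_eq_zero_iff.2 hd] at hs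
      exact Real.sign_eq_zero_iff.1 hs
    have hmono : MonotoneOn (fun y => f.eval y) (Set.Icc ξ η) :=
      monotoneOn_of_deriv_nonneg hconv hcont hdiff (fun y hy => by
        rw [hderiv, hz y (interior_subset hy)])
    have hanti : AntitoneOn (fun y => f.eval y) (Set.Icc ξ η) :=
      antitoneOn_of_deriv_nonpos hconv hcont hdiff (fun y hy => by
        rw [hderiv, hz y (interior_subset hy)])
    have hconst : ∀ y ∈ Set.Icc ξ η, f.eval y = 0 := by
      intro y hy
      have h2 : f.eval y = f.eval ξ := le_antisymm (hanti hmemξ hy hy.1) (hmono hmemξ hy hy.1)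
      exact h2.trans hξ.1
    have hf0 : f = 0 := by
      apply Polynomial.eq_zero_of_infinite_isRoot
      apply Set.Infinite.mono (s := Set.Icc ξ η)
      · intro y hy; exact hconst y hy
      · exact Set.Icc_infinite hlt
    apply hs0
    funext i
    have := hξ.2 i
    rw [hf0] at this
    simp [Polynomial.iterate_derivative_zero] at this
    exact this.symm
  · have hpos : ∀ y ∈ interior (Set.Icc ξ η), 0 < deriv (fun z => f.eval z) y := by
      intro y hy
      have hs := hkey y (interior_subset hy)
      rw [Real.sign_of_pos hd] at hs
      rw [hderiv]
      by_contra hp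
      push_neg at hp
      rcases eq_or_lt_of_le hp with hp | hp
      · rw [hp, Real.sign_zero] at hs; norm_num at hs
      · rw [Real.sign_of_neg hp] at hs; norm_num at hs
    have := strictMonoOn_of_deriv_pos hconv hcont hpos hmemξ hmemη hlt
    beta_reduce at this
    rw [hξ.1, hη.1] at this
    exact lt_irrefl 0 this

theorem stmt11 (n : ℕ) (hn : 1 ≤ n) (f : Polynomial ℝ) (hf : f.natDegree ≤ n)
    (s : Fin n → ℝ) (hs : ∀ i, s i = -1 ∨ s i = 0 ∨ s i = 1)
    (hs0 : s ≠ fun _ => 0)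
    {K : Type*} [Fintype K] (q : K → Polynomial ℝ) (ρ : K → SignRel) :
    ∃ θ : ℝ, ∀ k : K,
      (∃ x : ℝ, IsThomRoot n f s x ∧ (ρ k).holds ((q k).eval x)) →
      (ρ k).holds ((q k).eval θ) := by
  by_cases h : ∃ ξ, IsThomRoot n f s ξ
  · obtain ⟨ξ, hξ⟩ := h
    refine ⟨ξ, fun k ⟨x, hx, hxk⟩ => ?_⟩
    have hxe : x = ξ := by
      rcases le_total x ξ with hle | hle
      · exact thom_unique n hn f hf s hs0 hle hx hξ
      · exact (thom_unique n hn f hf s hs0 hle hξ hx).symm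
    rwa [hxe] at hxk
  · exact ⟨0, fun k ⟨x, hx, _⟩ => absurd ⟨x, hx⟩ h⟩
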